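/- Let D be a deterministic adaptive algorithm making exactly t distinct queries and consider the coupled process: first run D against fresh uniform answers a₁,…,a_t ∈ R; then sample u ← U; then rerun D, answering query i with a_i as long as (q′_{1..i}, u) ∉ BAD, and switching to answers f_{u,v} for an appropriately (conditionally uniformly) sampled v once BAD occurs. Under the two hypotheses of the framework lemma, the pair (U, V) produced by this process is uniformly distributed over U × V. -/

import Mathlib

/-- The queries a deterministic adaptive algorithm makes when fed the answer list
`a`: the `i`-th query is determined by the first `i-1` answers. -/
def queryList {D R : Type*} (nq : List R → D) (a : List R) : List D :=
  (List.range a.length).map (fun i => nq (a.take i))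

/-- The number of first-run answers that are kept in the second run of the coupled
process: if `i₀` is the first index (in `0,…,t`) at which the query prefix induced by
the first-run answers `a` becomes BAD for `u`, the process resamples `v` when making
query `i₀`, keeping the first `i₀ − 1` answers (for `i₀ = 0`, i.e. `(λ, u) ∈ BAD`,
`v` is uniform over all of `V`); if BAD never occurs, all `t` answers are kept. -/
def cutoff {D R U : Type*} (nq : List R → D) (BAD : List D → U → Prop)
    [∀ s u, Decidable (BAD s u)] (t : ℕ) (a : List R) (u : U) : ℕ :=
  if h : ((Finset.range (t + 1)).filter
      (fun i => BAD ((queryList nq a).take i) u)).Nonempty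
  then ((Finset.range (t + 1)).filter
      (fun i => BAD ((queryList nq a).take i) u)).min' h - 1
  else t

/-- The set of `v ∈ V` from which the coupled process samples, given first-run
answers `a` and `u`: those `v` for which `f_{u,v}` agrees with the kept answers. -/
def consistent {D R U V : Type*} [Fintype V] [DecidableEq R]
    (f : U → V → D → R) (nq : List R → D) (BAD : List D → U → Prop)
    [∀ s u, Decidable (BAD s u)] (t : ℕ) (a : List R) (u : U) : Finset V :=
  Finset.univ.filter (fun v : V =>
    ((queryList nq a).take (cutoff nq BAD t a u)).map (f u v)
      = a.take (cutoff nq BAD t a u))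

namespace Stmt19

variable {D R U : Type*}

/-- The transcript of answers obtained by running the algorithm `nq` against a fixed
oracle `f1`. -/
def run (f1 : D → R) (nq : List R → D) : ℕ → List R
  | 0 => []
  | n+1 => run f1 nq n ++ [f1 (nq (run f1 nq n))]

lemma run_length (f1 : D → R) (nq : List R → D) (n : ℕ) : (run f1 nq n).length = n := by
  induction n with
  | zero => rfl
  | succ n ih => simp [run, ih]

lemma run_take (f1 : D → R) (nq : List R → D) {m n : ℕ} (h : m ≤ n) :
    (run f1 nq n).take m = run f1 nq m := by
  induction n with
  | zero => interval_cases m; rfl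
  | succ n ih =>
    rcases Nat.lt_or_ge m (n+1) with hm | hm
    · rw [run, List.take_append_of_le_length (by rw [run_length]; omega), ih (by omega)]
    · have : m = n + 1 := le_antisymm h hm
      subst this
      rw [List.take_of_length_le (by rw [run_length])]

lemma queryList_length (nq : List R → D) (a : List R) :
    (queryList nq a).length = a.length := by simp [queryList]

lemma queryList_getElem (nq : List R → D) (a : List R) (k : ℕ)
    (hk : k < (queryList nq a).length) :
    (queryList nq a)[k] = nq (a.take k) := by
  simp [queryList] at hk ⊢

lemma queryList_take_congr (nq : List R → D) {a b : List R} (hab : a.length = b.length)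
    {i : ℕ} (h : ∀ j < i, a.take j = b.take j) :
    (queryList nq a).take i = (queryList nq b).take i := by
  unfold queryList
  rw [← List.map_take, ← List.map_take, List.take_range, hab, List.take_range]
  apply List.map_congr_left
  intro j hj
  rw [List.mem_range] at hj
  rw [h j (lt_of_lt_of_le hj (min_le_left _ _))]

variable (nq : List R → D) (BAD : List D → U → Prop)
  [∀ s u, Decidable (BAD s u)] (t : ℕ) (u : U)

lemma cutoff_le (a : List R) : cutoff nq BAD t a u ≤ t := by
  unfold cutoff
  split
  · rename_i h
    have := Finset.min'_mem _ h
    rw [Finset.mem_filter, Finset.mem_range] at this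
    omega
  · exact le_refl _

lemma cutoff_eq_zero_of_bad (a : List R)
    (h : BAD ((queryList nq a).take (cutoff nq BAD t a u)) u) :
    cutoff nq BAD t a u = 0 := by
  set c := cutoff nq BAD t a u with hc
  have hct : c ≤ t := cutoff_le nq BAD t u a
  have hmem : c ∈ (Finset.range (t + 1)).filter
      (fun i => BAD ((queryList nq a).take i) u) := by
    rw [Finset.mem_filter, Finset.mem_range]; exact ⟨by omega, h⟩
  have hne : ((Finset.range (t + 1)).filter
      (fun i => BAD ((queryList nq a).take i) u)).Nonempty := ⟨c, hmem⟩
  have hmin := Finset.min'_le _ _ hmem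
  have hdef : cutoff nq BAD t a u = ((Finset.range (t + 1)).filter
      (fun i => BAD ((queryList nq a).take i) u)).min' hne - 1 := by
    simp only [cutoff, dif_pos hne]
  omega

/-- The cutoff is a stopping time: it is determined by the kept prefix. -/
lemma cutoff_congr {a b : List R} (ha : a.length = t) (hb : b.length = t)
    (h : a.take (cutoff nq BAD t a u) = b.take (cutoff nq BAD t a u)) :
    cutoff nq BAD t b u = cutoff nq BAD t a u := by
  set j := cutoff nq BAD t a u with hj
  have hjt : j ≤ t := cutoff_le nq BAD t u a
  have hq : ∀ i ≤ j + 1, (queryList nq a).take i = (queryList nq b).take i := by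
    intro i hi
    apply queryList_take_congr nq (ha.trans hb.symm)
    intro k hk
    have hkj : k ≤ j := by omega
    calc a.take k = (a.take j).take k := by rw [List.take_take, min_eq_left hkj]
    _ = (b.take j).take k := by rw [h]
    _ = b.take k := by rw [List.take_take, min_eq_left hkj]
  have hbad : ∀ i ≤ j + 1,
      (BAD ((queryList nq a).take i) u ↔ BAD ((queryList nq b).take i) u) := by
    intro i hi; rw [hq i hi]
  by_cases hne : ((Finset.range (t + 1)).filter
      (fun i => BAD ((queryList nq a).take i) u)).Nonempty
  · set m := ((Finset.range (t + 1)).filter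
      (fun i => BAD ((queryList nq a).take i) u)).min' hne with hm
    have hmmem := Finset.min'_mem _ hne
    rw [← hm, Finset.mem_filter, Finset.mem_range] at hmmem
    have hjm : j = m - 1 := by
      rw [hj]; simp only [cutoff, dif_pos hne]; rfl
    have hmj1 : m ≤ j + 1 := by omega
    have hminA : ∀ i < m, ¬ BAD ((queryList nq a).take i) u := by
      intro i hi hbadi
      have : m ≤ i := Finset.min'_le _ _ (by
        rw [Finset.mem_filter, Finset.mem_range]; exact ⟨by omega, hbadi⟩)
      omega
    have hmB : BAD ((queryList nq b).take m) u := (hbad m hmj1).mp hmmem.2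
    have hneB : ((Finset.range (t + 1)).filter
        (fun i => BAD ((queryList nq b).take i) u)).Nonempty := by
      refine ⟨m, ?_⟩
      rw [Finset.mem_filter, Finset.mem_range]; exact ⟨hmmem.1, hmB⟩
    rw [cutoff, dif_pos hneB]
    have hle : ((Finset.range (t + 1)).filter
        (fun i => BAD ((queryList nq b).take i) u)).min' hneB ≤ m :=
      Finset.min'_le _ _ (by rw [Finset.mem_filter, Finset.mem_range]; exact ⟨hmmem.1, hmB⟩)
    have hge : m ≤ ((Finset.range (t + 1)).filter
        (fun i => BAD ((queryList nq b).take i) u)).min' hneB := by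
      by_contra hlt
      push_neg at hlt
      have hmemB := Finset.min'_mem _ hneB
      rw [Finset.mem_filter, Finset.mem_range] at hmemB
      exact hminA _ hlt ((hbad _ (by omega)).mpr hmemB.2)
    omega
  · have hjt' : j = t := by rw [hj]; simp only [cutoff, dif_neg hne]
    have h1 : a.take t = a := by rw [← ha]; exact List.take_length
    have h2 : b.take t = b := by rw [← hb]; exact List.take_length
    have hab : a = b := by rw [hjt', h1, h2] at h; exact h
    rw [← hab, hj]

lemma take_succ_eq (l : List R) (c : ℕ) (hc : c < l.length) :
    l.take (c+1) = l.take c ++ [l[c]] := by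
  rw [List.take_succ, List.getElem?_eq_getElem hc]
  rfl

lemma take_map_eq_iff_run (f1 : D → R) (nq : List R → D) (a : List R) (c : ℕ)
    (hc : c ≤ a.length) :
    ((queryList nq a).take c).map f1 = a.take c ↔ a.take c = run f1 nq c := by
  induction c with
  | zero => simp [run]
  | succ c ih =>
    have hc' : c ≤ a.length := by omega
    have hcl : c < a.length := by omega
    have hq : c < (queryList nq a).length := by rw [queryList_length]; omega
    rw [take_succ_eq a c hcl, take_succ_eq _ c hq, List.map_append,
      queryList_getElem nq a c hq]
    show ((queryList nq a).take c).map f1 ++ [f1 (nq (a.take c))] = _ ↔ _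
    rw [run]
    constructor
    · intro h
      obtain ⟨h1, h2⟩ := List.append_inj' h (by simp)
      have h3 := (ih hc').mp h1
      rw [h3] at h2 ⊢
      simp at h2
      rw [h2]
    · intro h
      obtain ⟨h1, h2⟩ := List.append_inj' h (by
        simp [run_length])
      have h3 := (ih hc').mpr h1
      simp only [List.cons.injEq, and_true] at h2
      rw [h3, h1, h2]

lemma ofFn_take_eq_iff {t : ℕ} (a b : Fin t → R) (c : ℕ) (hc : c ≤ t) :
    (List.ofFn a).take c = (List.ofFn b).take c ↔
      ∀ i : Fin t, (i : ℕ) < c → a i = b i := by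
  constructor
  · intro h i hi
    have h1 : (i : ℕ) < ((List.ofFn a).take c).length := by
      simp only [List.length_take, List.length_ofFn]
      have := i.2; omega
    have h2 : (i : ℕ) < ((List.ofFn b).take c).length := by
      simp only [List.length_take, List.length_ofFn]
      have := i.2; omega
    have := List.getElem_of_eq h h1
    simpa [List.getElem_take, List.getElem_ofFn] using this
  · intro h
    apply List.ext_getElem (by simp)
    intro k h1 h2
    have hk : k < c := by
      simp only [List.length_take, List.length_ofFn] at h1; omega
    have hkt : k < t := by
      simp only [List.length_take, List.length_ofFn] at h1; omega
    simp only [List.getElem_take, List.getElem_ofFn]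
    exact h ⟨k, hkt⟩ hk

lemma card_filter_fin_lt (t c : ℕ) :
    (Finset.univ.filter (fun i : Fin t => ¬ (i : ℕ) < c)).card = t - c := by
  rw [show t - c = (Finset.Ico c t).card by rw [Nat.card_Ico]]
  apply Finset.card_bij (fun (i : Fin t) _ => (i : ℕ))
  · intro a ha
    simp only [Finset.mem_filter, Finset.mem_univ, true_and, not_lt] at ha
    rw [Finset.mem_Ico]
    exact ⟨ha, a.2⟩
  · intro a₁ _ a₂ _ h
    exact Fin.ext h
  · intro b hb
    rw [Finset.mem_Ico] at hb
    refine ⟨⟨b, hb.2⟩, ?_, rfl⟩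
    simp only [Finset.mem_filter, Finset.mem_univ, true_and, not_lt]
    exact hb.1

lemma card_prefix_filter {R : Type*} [Fintype R] [DecidableEq R] (t c : ℕ) (hc : c ≤ t)
    (g : Fin t → R) :
    (Finset.univ.filter (fun a : Fin t → R => ∀ i : Fin t, (i : ℕ) < c → a i = g i)).card
      = Fintype.card R ^ (t - c) := by
  have hset : Finset.univ.filter (fun a : Fin t → R => ∀ i : Fin t, (i : ℕ) < c → a i = g i)
      = Fintype.piFinset (fun i : Fin t =>
          if (i : ℕ) < c then ({g i} : Finset R) else Finset.univ) := by
    ext a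
    simp only [Finset.mem_filter, Finset.mem_univ, true_and, Fintype.mem_piFinset]
    apply forall_congr'
    intro i
    split_ifs with h
    · simp [h]
    · simp [h]
  rw [hset, Fintype.card_piFinset]
  have : ∀ i : Fin t, (if (i : ℕ) < c then ({g i} : Finset R) else Finset.univ).card
      = if (i : ℕ) < c then 1 else Fintype.card R := by
    intro i; split_ifs <;> simp
  rw [Finset.prod_congr rfl (fun i _ => this i), Finset.prod_ite]
  simp only [Finset.prod_const_one, Finset.prod_const, one_mul]
  rw [card_filter_fin_lt t c]

end Stmt19

/-- Claim `DistSame`: in the coupled process of the framework lemma —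
sample uniform first-run answers `a ∈ R^t`, sample `u ← U` uniformly, rerun the
deterministic distinguisher answering with `a` until BAD occurs, then sample `v`
uniformly from the consistent set — the resulting pair `(U, V)` is uniform over
`U × V`. Equivalently, for every `u` and `v`, the probability that the process
outputs `v` (given `u`) is `1/|V|`; after multiplying through by `|R|^t`, this reads
`∑_{a ∈ R^t} [v ∈ S(a,u)] / |S(a,u)| = |R|^t / |V|`. -/
theorem stmt_19 {U V D R : Type*} [Fintype U] [Fintype V] [Fintype R]
    [Nonempty U] [Nonempty V] [Nonempty R] [DecidableEq V] [DecidableEq R]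
    (f : U → V → D → R) (BAD : List D → U → Prop) [∀ s u, Decidable (BAD s u)]
    (hmono : ∀ (s₁ : List D) (u : U), BAD s₁ u → ∀ s₂ : List D, s₁ <+: s₂ → BAD s₂ u)
    (t : ℕ)
    (h1 : ∀ q : List D, q.length ≤ t → q.Nodup → ∀ u : U, ¬ BAD q u →
      ∀ ys : List R, ys.length = q.length →
        (Finset.univ.filter (fun v : V => q.map (f u v) = ys)).card
          * (Fintype.card R) ^ q.length = Fintype.card V)
    (nq : List R → D)
    (hdistinct : ∀ a : List R, a.length ≤ t → (queryList nq a).Nodup)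
    (u : U) (v : V) :
    ∑ a : Fin t → R,
      (if v ∈ consistent f nq BAD t (List.ofFn a) u
        then (1 : ℝ) / (consistent f nq BAD t (List.ofFn a) u).card else 0)
      = (Fintype.card R : ℝ) ^ t / Fintype.card V := by
  classical
  -- the transcript of the run against `f u v`
  set P : List R := Stmt19.run (f u v) nq t with hPdef
  have hP : P.length = t := Stmt19.run_length _ _ _
  set c : ℕ := cutoff nq BAD t P u with hcdef
  have hct : c ≤ t := Stmt19.cutoff_le nq BAD t u P
  let g : Fin t → R := fun i => P[(i : ℕ)]'(by rw [hP]; exact i.2)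
  have hPofFn : P = List.ofFn g := by
    apply List.ext_getElem (by simp [hP])
    intro k hk1 hk2
    simp [g]
  -- membership characterization via the transcript
  have key : ∀ a : Fin t → R, v ∈ consistent f nq BAD t (List.ofFn a) u ↔
      ∀ i : Fin t, (i : ℕ) < c → a i = g i := by
    intro a
    have hA : (List.ofFn a).length = t := by simp
    rw [consistent, Finset.mem_filter]
    simp only [Finset.mem_univ, true_and]
    have hcAt : cutoff nq BAD t (List.ofFn a) u ≤ t := Stmt19.cutoff_le nq BAD t u _
    rw [Stmt19.take_map_eq_iff_run (f u v) nq _ _ (by rw [hA]; exact hcAt)]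
    have hrun : Stmt19.run (f u v) nq (cutoff nq BAD t (List.ofFn a) u)
        = P.take (cutoff nq BAD t (List.ofFn a) u) :=
      (Stmt19.run_take (f u v) nq hcAt).symm
    rw [hrun]
    constructor
    · intro h
      have hc_eq : c = cutoff nq BAD t (List.ofFn a) u :=
        Stmt19.cutoff_congr nq BAD t u hA hP h
      rw [← hc_eq] at h
      rw [hPofFn] at h
      exact (Stmt19.ofFn_take_eq_iff a g c hct).mp h
    · intro h
      have h' : (List.ofFn a).take c = P.take c := by
        rw [hPofFn]
        exact (Stmt19.ofFn_take_eq_iff a g c hct).mpr h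
      have hc_eq : cutoff nq BAD t (List.ofFn a) u = c :=
        Stmt19.cutoff_congr nq BAD t u hP hA h'.symm
      rw [hc_eq, h']
  -- cardinality of the consistent set for members
  have hcard : ∀ a : Fin t → R, v ∈ consistent f nq BAD t (List.ofFn a) u →
      (consistent f nq BAD t (List.ofFn a) u).card * (Fintype.card R) ^ c
        = Fintype.card V := by
    intro a hv
    have hA : (List.ofFn a).length = t := by simp
    have hcAt : cutoff nq BAD t (List.ofFn a) u ≤ t := Stmt19.cutoff_le nq BAD t u _
    -- from membership, the kept prefix agrees with the transcript, so cutoffs agree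
    have hmap : ((queryList nq (List.ofFn a)).take (cutoff nq BAD t (List.ofFn a) u)).map
        (f u v) = (List.ofFn a).take (cutoff nq BAD t (List.ofFn a) u) := by
      rw [consistent, Finset.mem_filter] at hv
      exact hv.2
    have htake : (List.ofFn a).take (cutoff nq BAD t (List.ofFn a) u)
        = P.take (cutoff nq BAD t (List.ofFn a) u) := by
      have := (Stmt19.take_map_eq_iff_run (f u v) nq _ _
        (by rw [hA]; exact hcAt)).mp hmap
      rw [this, Stmt19.run_take (f u v) nq hcAt]
    have hc_eq : c = cutoff nq BAD t (List.ofFn a) u :=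
      Stmt19.cutoff_congr nq BAD t u hA hP htake
    by_cases hbad : BAD ((queryList nq (List.ofFn a)).take
        (cutoff nq BAD t (List.ofFn a) u)) u
    · -- cutoff is 0, the consistent set is everything
      have h0 : cutoff nq BAD t (List.ofFn a) u = 0 :=
        Stmt19.cutoff_eq_zero_of_bad nq BAD t u _ hbad
      have hc0 : c = 0 := by rw [hc_eq, h0]
      have hall : consistent f nq BAD t (List.ofFn a) u = Finset.univ := by
        rw [consistent, h0]
        simp
      rw [hall, hc0]
      simp
    · -- apply the uniformity hypothesis
      have hql : ((queryList nq (List.ofFn a)).take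
          (cutoff nq BAD t (List.ofFn a) u)).length = cutoff nq BAD t (List.ofFn a) u := by
        rw [List.length_take, Stmt19.queryList_length, hA]
        omega
      have := h1 ((queryList nq (List.ofFn a)).take (cutoff nq BAD t (List.ofFn a) u))
        (by rw [hql]; exact hcAt)
        ((hdistinct (List.ofFn a) (le_of_eq hA)).sublist (List.take_sublist _ _))
        u hbad
        ((List.ofFn a).take (cutoff nq BAD t (List.ofFn a) u))
        (by rw [List.length_take, hA, hql]; omega)
      rw [hql] at this
      rw [consistent, hc_eq]
      exact this
  -- rewrite each summand
  have hterm : ∀ a : Fin t → R,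
      (if v ∈ consistent f nq BAD t (List.ofFn a) u
        then (1 : ℝ) / (consistent f nq BAD t (List.ofFn a) u).card else 0)
      = (if (∀ i : Fin t, (i : ℕ) < c → a i = g i)
        then ((Fintype.card R : ℝ) ^ c / (Fintype.card V : ℝ)) else 0) := by
    intro a
    by_cases hv : v ∈ consistent f nq BAD t (List.ofFn a) u
    · rw [if_pos hv, if_pos ((key a).mp hv)]
      have hnat := hcard a hv
      have hreal : ((consistent f nq BAD t (List.ofFn a) u).card : ℝ)
          * (Fintype.card R : ℝ) ^ c = (Fintype.card V : ℝ) := by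
        exact_mod_cast hnat
      have hV0 : (0 : ℝ) < (Fintype.card V : ℝ) := by
        exact_mod_cast Fintype.card_pos
      have hR0 : (0 : ℝ) < (Fintype.card R : ℝ) ^ c :=
        pow_pos (by exact_mod_cast Fintype.card_pos) c
      have hS0 : ((consistent f nq BAD t (List.ofFn a) u).card : ℝ) ≠ 0 := by
        intro h0
        rw [h0, zero_mul] at hreal
        linarith
      rw [div_eq_div_iff hS0 (ne_of_gt hV0)]
      rw [one_mul, mul_comm]
      exact hreal.symm
    · rw [if_neg hv, if_neg (fun hco => hv ((key a).mpr hco))]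
  rw [Finset.sum_congr rfl (fun a _ => hterm a), ← Finset.sum_filter,
    Finset.sum_const, nsmul_eq_mul]
  have hcount := Stmt19.card_prefix_filter t c hct g
  rw [hcount]
  push_cast
  rw [← mul_div_assoc, ← pow_add, Nat.sub_add_cancel hct]
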